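/- Let p be an odd prime, Ψ_∞/Ψ a totally ramified ℤ_p-extension of an unramified extension Ψ of ℚ_p, R_n the ring of integers of the n-th layer Ψ_n, π_{n+1} a uniformizer of R_{n+1}, and f(x) = Σ_{i=0}^p a_i x^i ∈ R_n[x] a monic Eisenstein polynomial of degree p with f(π_{n+1}) = 0. Then f'(x) ∈ p·R_{n+1}[x] (equivalently, p divides a_i for all 1 ≤ i ≤ p−1) if and only if the different 𝔇_{Ψ_{n+1}/Ψ_n} is contained in p·R_{n+1}. -/

import Mathlib

noncomputable section

open scoped Classical

/-- An additive `ℚ ∪ {∞}`-valued valuation on a field `A`, normalized by `v p = 1`.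
This models the `p`-adic valuation `v_p` on (an algebraic closure of) `ℚ_p`,
with the convention `v 0 = ∞`. -/
structure PadicValData (A : Type) [Field A] (p : ℕ) : Type where
  v : A → WithTop ℚ
  v_top_iff : ∀ x : A, v x = ⊤ ↔ x = 0
  v_mul : ∀ x y : A, v (x * y) = v x + v y
  v_min_le_add : ∀ x y : A, min (v x) (v y) ≤ v (x + y)
  v_coe_p : v (p : A) = 1

variable {p : ℕ} {A : Type} [Field A]

/-- `x ∈ F` is a uniformizer of the `p`-adic field `F` (embedded in `A` by `emb`):
its valuation is minimal among the positive valuations of elements of `F`. -/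
def IsUniformizer (vd : PadicValData A p) {F : Type} [Field F] (emb : F →+* A) (x : F) : Prop :=
  x ≠ 0 ∧ 0 < vd.v (emb x) ∧
    ∀ y : F, 0 < vd.v (emb y) → vd.v (emb x) ≤ vd.v (emb y)

/-- `y` belongs to the `j`-th power `m_F^j` of the maximal ideal of the ring of integers
`O_F` of `F` (embedded in `A` by `emb`): `y` is a multiple, by an element of `O_F`, of a
product of `j` elements of the maximal ideal `m_F`.  (For `j = 0` this says `y ∈ O_F`.) -/
def InMaxIdealPow (vd : PadicValData A p) {F : Type} [Field F] (emb : F →+* A) (j : ℕ)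
    (y : A) : Prop :=
  ∃ (u : F) (s : Fin j → F), 0 ≤ vd.v (emb u) ∧ (∀ k, 0 < vd.v (emb (s k))) ∧
    y = emb u * ∏ k, emb (s k)

/-- The lower-numbering ramification set
`G_i = {σ ∈ Gal(L/K) | ∀ x ∈ O_L, σ x - x ∈ m_L^{i+1}}` (with `G_i = G` for `i ≤ -1`). -/
def lowerRamSet (vd : PadicValData A p) (K L : Type) [Field K] [Field L] [Algebra K L]
    (emb : L →+* A) (i : ℤ) : Set (L ≃ₐ[K] L) :=
  {σ | ∀ x : L, 0 ≤ vd.v (emb x) →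
    InMaxIdealPow vd emb (i + 1).toNat (emb (σ x) - emb x)}

/-- The Herbrand function `φ_{L/K}(u) = ∫_0^u dt / (G_0 : G_t)`, where `G_t = G_{⌈t⌉}`. -/
noncomputable def herbrandPhi (vd : PadicValData A p) (K L : Type) [Field K] [Field L]
    [Algebra K L] (emb : L →+* A) (u : ℝ) : ℝ :=
  ∫ t in (0:ℝ)..u,
    (Nat.card ↥(lowerRamSet vd K L emb ⌈t⌉) : ℝ) /
      (Nat.card ↥(lowerRamSet vd K L emb 0) : ℝ)

/-- The Herbrand function `ψ_{L/K}`, the inverse of `φ_{L/K}`. -/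
noncomputable def herbrandPsi (vd : PadicValData A p) (K L : Type) [Field K] [Field L]
    [Algebra K L] (emb : L →+* A) (w : ℝ) : ℝ :=
  Function.invFun (herbrandPhi vd K L emb) w

/-- The upper-numbering ramification set `G^i = G_{ψ_{L/K}(i)}` of `Gal(L/K)`. -/
def upperRamSet (vd : PadicValData A p) (K L : Type) [Field K] [Field L] [Algebra K L]
    (emb : L →+* A) (i : ℤ) : Set (L ≃ₐ[K] L) :=
  lowerRamSet vd K L emb ⌈herbrandPsi vd K L emb (i : ℝ)⌉

/-- Condition (ram): the upper ramification groups of `L/K` satisfy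
`G = G^{-1} = G^0 ⊇ G^1 ⊋ G^2 ⊋ ⋯ ⊋ G^n ⊋ G^{n+1} = {1}`, with `G^i/G^{i+1}` of order `p`
for `1 ≤ i ≤ n` and `G^0/G^1` of order `p - 1`. -/
def RamCond (vd : PadicValData A p) (K L : Type) [Field K] [Field L] [Algebra K L]
    (emb : L →+* A) (n : ℕ) : Prop :=
  upperRamSet vd K L emb (-1) = Set.univ ∧
  upperRamSet vd K L emb 0 = Set.univ ∧
  (∀ i : ℤ, upperRamSet vd K L emb (i + 1) ⊆ upperRamSet vd K L emb i) ∧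
  Nat.card ↥(upperRamSet vd K L emb 0)
    = (p - 1) * Nat.card ↥(upperRamSet vd K L emb 1) ∧
  (∀ i : ℕ, 1 ≤ i → i ≤ n →
    Nat.card ↥(upperRamSet vd K L emb (i : ℤ))
      = p * Nat.card ↥(upperRamSet vd K L emb ((i : ℤ) + 1))) ∧
  upperRamSet vd K L emb ((n : ℤ) + 1) = {1}

/-- The local resolvent `⟨α|χ⟩ = ∑_{γ ∈ Gal(L/K)} χ(γ) γ(α)`, computed in `A`. -/
noncomputable def localResolvent (K L : Type) [Field K] [Field L] [Algebra K L]
    (emb : L →+* A) (χ : (L ≃ₐ[K] L) → A) (α : L) : A :=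
  ∑ᶠ γ : L ≃ₐ[K] L, χ γ * emb (γ α)


/-- `layer` is the tower of layers of a totally ramified `ℤ_p`-extension `Ψ_∞/Ψ`:
`layer n = Ψ_n` is the `n`-th layer, i.e. the unique subextension with
`Gal(Ψ_n/Ψ) ≅ ℤ/p^n`; each layer is Galois and cyclic of degree `p^n` over `Ψ`,
the layers are increasing with union `Ψ_∞`, and each `Ψ_n/Ψ` is totally ramified
(witnessed by a uniformizer of `Ψ_n` of valuation `p^{-n}`, `Ψ` being unramified
over `ℚ_p`). -/
def IsZpExtensionTower (vd : PadicValData A p) (Ψ Ψinf : Type) [Field Ψ] [Field Ψinf]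
    [Algebra Ψ Ψinf] (emb : Ψinf →+* A)
    (layer : ℕ → IntermediateField Ψ Ψinf) : Prop :=
  layer 0 = ⊥ ∧
  (∀ n, layer n ≤ layer (n + 1)) ∧
  (⨆ n, layer n) = ⊤ ∧
  (∀ n, IsGalois Ψ ↥(layer n)) ∧
  (∀ n, IsCyclic (↥(layer n) ≃ₐ[Ψ] ↥(layer n))) ∧
  (∀ n, Nat.card (↥(layer n) ≃ₐ[Ψ] ↥(layer n)) = p ^ n) ∧
  (∀ n, ∃ x : ↥(layer n),
    IsUniformizer vd (emb.comp ((layer n).val : ↥(layer n) →+* Ψinf)) x ∧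
    vd.v ((emb.comp ((layer n).val : ↥(layer n) →+* Ψinf)) x)
      = ((((p : ℚ) ^ n)⁻¹ : ℚ) : WithTop ℚ))

end

section

namespace PadicValData
variable {p : ℕ} {A : Type} [Field A] (vd : PadicValData A p)

lemma v_ne_top {x : A} (hx : x ≠ 0) : vd.v x ≠ ⊤ := fun h => hx ((vd.v_top_iff x).1 h)

lemma v_zero : vd.v 0 = ⊤ := (vd.v_top_iff 0).2 rfl

lemma v_one : vd.v 1 = 0 := by
  have h := vd.v_mul 1 1
  rw [one_mul] at h
  have h1 : vd.v 1 ≠ ⊤ := vd.v_ne_top one_ne_zero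
  lift vd.v 1 to ℚ using h1 with q hq
  have : q = q + q := by exact_mod_cast h
  have : q = 0 := by linarith
  exact_mod_cast this

lemma v_neg (x : A) : vd.v (-x) = vd.v x := by
  have h := vd.v_mul (-1) (-1)
  rw [neg_one_mul, neg_neg, vd.v_one] at h
  have h1 : vd.v (-1 : A) ≠ ⊤ := vd.v_ne_top (by norm_num)
  lift vd.v (-1 : A) to ℚ using h1 with q hq
  have hq0 : q = 0 := by
    have : (0 : ℚ) = q + q := by exact_mod_cast h
    linarith
  have h2 : vd.v (-x) = vd.v (-1 * x) := by ring_nf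
  rw [h2, vd.v_mul, ← hq, hq0]
  simp

lemma v_natCast_nonneg (k : ℕ) : 0 ≤ vd.v (k : A) := by
  induction k with
  | zero => simp [vd.v_zero]
  | succ m ih =>
    have : ((m + 1 : ℕ) : A) = (m : A) + 1 := by push_cast; ring
    rw [this]
    refine le_trans ?_ (vd.v_min_le_add _ _)
    rw [vd.v_one]
    exact le_min ih le_rfl

lemma v_intCast_nonneg (k : ℤ) : 0 ≤ vd.v (k : A) := by
  rcases k.natAbs_eq with h | h
  · rw [h, Int.cast_natCast]; exact vd.v_natCast_nonneg _
  · rw [h, Int.cast_neg, Int.cast_natCast, vd.v_neg]; exact vd.v_natCast_nonneg _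

lemma v_inv {x : A} (hx : x ≠ 0) {q : ℚ} (hq : vd.v x = (q : WithTop ℚ)) :
    vd.v x⁻¹ = ((-q : ℚ) : WithTop ℚ) := by
  have h := vd.v_mul x x⁻¹
  rw [mul_inv_cancel₀ hx, vd.v_one, hq] at h
  have h1 : vd.v x⁻¹ ≠ ⊤ := vd.v_ne_top (inv_ne_zero hx)
  lift vd.v x⁻¹ to ℚ using h1 with r hr
  have : (0 : ℚ) = q + r := by exact_mod_cast h
  have : r = -q := by linarith
  exact_mod_cast this

lemma v_add_eq_left {x y : A} (h : vd.v x < vd.v y) : vd.v (x + y) = vd.v x := by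
  refine le_antisymm ?_ ?_
  · have h2 := vd.v_min_le_add (x + y) (-y)
    rw [add_neg_cancel_right, vd.v_neg] at h2
    rcases min_le_iff.1 h2 with h3 | h3
    · exact h3
    · exact absurd h3 (not_le.2 h)
  · refine le_trans ?_ (vd.v_min_le_add x y)
    exact le_min le_rfl h.le

lemma v_sum_ge {ι : Type*} (s : Finset ι) (g : ι → A) {c : WithTop ℚ}
    (h : ∀ i ∈ s, c ≤ vd.v (g i)) : c ≤ vd.v (∑ i ∈ s, g i) := by
  classical
  induction s using Finset.induction with
  | empty => simp [vd.v_zero]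
  | insert _ _ hni ih =>
    rename_i a s'
    rw [Finset.sum_insert hni]
    refine le_trans ?_ (vd.v_min_le_add _ _)
    exact le_min (h a (Finset.mem_insert_self a s'))
      (ih fun i hi => h i (Finset.mem_insert_of_mem hi))

lemma v_sum_gt {ι : Type*} (s : Finset ι) (g : ι → A) {b : WithTop ℚ} (hb : b ≠ ⊤)
    (h : ∀ i ∈ s, b < vd.v (g i)) : b < vd.v (∑ i ∈ s, g i) := by
  classical
  induction s using Finset.induction with
  | empty => simpa [vd.v_zero] using lt_top_iff_ne_top.2 hb
  | insert _ _ hni ih =>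
    rename_i a s'
    rw [Finset.sum_insert hni]
    refine lt_of_lt_of_le ?_ (vd.v_min_le_add _ _)
    exact lt_min (h a (Finset.mem_insert_self a s'))
      (ih fun i hi => h i (Finset.mem_insert_of_mem hi))

/-- if all (nonzero) terms have pairwise distinct valuations, a lower bound on the
valuation of the sum gives a lower bound on each term. -/
lemma v_sum_distinct {ι : Type*} {s : Finset ι} {g : ι → A} {c : WithTop ℚ}
    (hdist : ∀ i ∈ s, ∀ j ∈ s, i ≠ j → g i ≠ 0 → g j ≠ 0 → vd.v (g i) ≠ vd.v (g j))
    (hsum : c ≤ vd.v (∑ i ∈ s, g i)) : ∀ i ∈ s, c ≤ vd.v (g i) := by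
  classical
  by_contra hcon
  push_neg at hcon
  obtain ⟨i₁, hi₁s, hi₁⟩ := hcon
  -- pick the element of minimal valuation
  obtain ⟨i₀, hi₀s, hi₀min⟩ := Finset.exists_min_image s (fun i => vd.v (g i)) ⟨i₁, hi₁s⟩
  have hi₀lt : vd.v (g i₀) < c := lt_of_le_of_lt (hi₀min i₁ hi₁s) hi₁
  have hgi₀ : g i₀ ≠ 0 := by
    intro h0
    rw [h0, vd.v_zero] at hi₀lt
    exact absurd hi₀lt (not_lt.2 le_top)
  have hrest : vd.v (g i₀) < vd.v (∑ i ∈ s.erase i₀, g i) := by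
    refine vd.v_sum_gt _ _ (vd.v_ne_top hgi₀) ?_
    intro j hj
    have hjs := Finset.mem_of_mem_erase hj
    have hne : i₀ ≠ j := fun h => (Finset.ne_of_mem_erase hj) h.symm
    by_cases hgj : g j = 0
    · rw [hgj, vd.v_zero]; exact lt_top_iff_ne_top.2 (vd.v_ne_top hgi₀)
    · exact lt_of_le_of_ne (hi₀min j hjs) (hdist i₀ hi₀s j hjs hne hgi₀ hgj)
  have : vd.v (∑ i ∈ s, g i) = vd.v (g i₀) := by
    rw [← Finset.add_sum_erase s g hi₀s]
    exact vd.v_add_eq_left hrest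
  rw [this] at hsum
  exact absurd (lt_of_le_of_lt hsum hi₀lt) (lt_irrefl _)

lemma v_pow_of_eq {x : A} {q : ℚ} (hq : vd.v x = (q : WithTop ℚ)) (k : ℕ) :
    vd.v (x ^ k) = ((k * q : ℚ) : WithTop ℚ) := by
  induction k with
  | zero => simpa using vd.v_one
  | succ m ih =>
    rw [pow_succ, vd.v_mul, ih, hq, ← WithTop.coe_add]
    congr 1
    push_cast
    ring

lemma v_pow_nonneg {x : A} (hx : 0 ≤ vd.v x) (k : ℕ) : 0 ≤ vd.v (x ^ k) := by
  induction k with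
  | zero => simpa using le_of_eq vd.v_one.symm
  | succ m ih =>
    rw [pow_succ, vd.v_mul]
    exact add_nonneg ih hx

/-- a natural number not divisible by `p` has valuation `0`. -/
lemma v_nat_coprime [hp : Fact p.Prime] {i : ℕ} (hi : ¬ p ∣ i) : vd.v (i : A) = 0 := by
  have hcop : Nat.Coprime p i := (Nat.Prime.coprime_iff_not_dvd hp.out).2 hi
  have hcop' : IsCoprime (i : ℤ) (p : ℤ) := by
    rw [Int.isCoprime_iff_gcd_eq_one]
    simpa [Int.gcd, Nat.coprime_comm] using hcop.symm
  obtain ⟨u, w, huw⟩ := hcop'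
  have hA : (u : A) * (i : A) + (w : A) * (p : A) = 1 := by
    have := congrArg (fun z : ℤ => (z : A)) huw
    push_cast at this
    simpa using this
  refine le_antisymm ?_ (vd.v_natCast_nonneg i)
  by_contra hlt
  push_neg at hlt
  have h1 : (0 : WithTop ℚ) < vd.v ((u : A) * (i : A)) := by
    rw [vd.v_mul]
    exact lt_of_lt_of_le hlt (le_add_of_nonneg_left (vd.v_intCast_nonneg (A := A) u))
  have h2 : (0 : WithTop ℚ) < vd.v ((w : A) * (p : A)) := by
    rw [vd.v_mul, vd.v_coe_p]
    have h01 : (0 : WithTop ℚ) < 1 := by exact_mod_cast (zero_lt_one (α := ℚ))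
    exact lt_of_lt_of_le h01 (le_add_of_nonneg_left (vd.v_intCast_nonneg (A := A) w))
  have h3 := vd.v_min_le_add ((u : A) * (i : A)) ((w : A) * (p : A))
  rw [hA, vd.v_one] at h3
  rcases min_le_iff.1 h3 with h4 | h4
  · exact absurd h4 (not_le.2 h1)
  · exact absurd h4 (not_le.2 h2)

end PadicValData

set_option synthInstance.maxHeartbeats 1000000 in
set_option maxHeartbeats 1000000 in
/-- Lemma 3.2. Let `p` be an odd prime, `Ψ_∞/Ψ` a totally ramified
`ℤ_p`-extension of an unramified extension `Ψ` of `ℚ_p`, `R_n` the ring of integers of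
the `n`-th layer `Ψ_n`, `π_{n+1}` a uniformizer of `R_{n+1}`, and
`f(x) = ∑_{i=0}^p a_i x^i ∈ R_n[x]` a monic Eisenstein polynomial of degree `p` with
`f(π_{n+1}) = 0`.  Then `f'(x) ∈ p·R_{n+1}[x]` (equivalently, `p` divides `a_i` for all
`1 ≤ i ≤ p−1`) if and only if the different `𝔇_{Ψ_{n+1}/Ψ_n}` is contained in
`p·R_{n+1}`; here `𝔇_{Ψ_{n+1}/Ψ_n} = (f'(π_{n+1}))`, so the latter condition reads
`f'(π_{n+1}) ∈ p·R_{n+1}`. -/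
theorem statement13 {p : ℕ} [Fact p.Prime] (hp : Odd p)
    {A : Type} [Field A] (vd : PadicValData A p)
    (Ψ Ψinf : Type) [Field Ψ] [Field Ψinf]
    [Algebra ℚ_[p] Ψ] [FiniteDimensional ℚ_[p] Ψ] [Algebra Ψ Ψinf]
    (emb : Ψinf →+* A)
    (hunram : IsUniformizer vd (emb.comp (algebraMap Ψ Ψinf)) (p : Ψ))
    (layer : ℕ → IntermediateField Ψ Ψinf)
    (htower : IsZpExtensionTower vd Ψ Ψinf emb layer)
    (n : ℕ) (hle : layer n ≤ layer (n + 1))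
    (πn1 : ↥(layer (n + 1)))
    (hπn1 : IsUniformizer vd
      (emb.comp ((layer (n + 1)).val : ↥(layer (n + 1)) →+* Ψinf)) πn1)
    (f : Polynomial ↥(layer n))
    (hmonic : f.Monic) (hdeg : f.natDegree = p)
    (hint : ∀ i : ℕ, 0 ≤ vd.v ((emb.comp ((layer n).val : ↥(layer n) →+* Ψinf)) (f.coeff i)))
    (heis : ∀ i : ℕ, i < p →
      InMaxIdealPow vd (emb.comp ((layer n).val : ↥(layer n) →+* Ψinf)) 1
        ((emb.comp ((layer n).val : ↥(layer n) →+* Ψinf)) (f.coeff i)))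
    (heis0 : IsUniformizer vd
      (emb.comp ((layer n).val : ↥(layer n) →+* Ψinf)) (f.coeff 0)) :
    letI : Algebra ↥(layer n) ↥(layer (n + 1)) :=
      ((IntermediateField.inclusion hle).toRingHom).toAlgebra
    (Polynomial.aeval πn1 f = 0 →
      ((∀ i : ℕ, 1 ≤ i → i ≤ p - 1 →
          ∃ r : ↥(layer n),
            0 ≤ vd.v ((emb.comp ((layer n).val : ↥(layer n) →+* Ψinf)) r) ∧
            f.coeff i = (p : ↥(layer n)) * r)
        ↔ (∃ r : ↥(layer (n + 1)),
            0 ≤ vd.v ((emb.comp ((layer (n + 1)).val : ↥(layer (n + 1)) →+* Ψinf)) r) ∧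
            Polynomial.aeval πn1 (Polynomial.derivative f)
              = (p : ↥(layer (n + 1))) * r))) := by
  classical
  obtain ⟨-, -, -, -, -, -, huni⟩ := htower
  obtain ⟨πK, hπKu, hπKv⟩ := huni n
  obtain ⟨x1, hx1u, hx1v⟩ := huni (n + 1)
  letI : Algebra ↥(layer n) ↥(layer (n + 1)) :=
    ((IntermediateField.inclusion hle).toRingHom).toAlgebra
  intro _hroot
  set embK : ↥(layer n) →+* A := emb.comp ((layer n).val : ↥(layer n) →+* Ψinf) with hembK
  set embL : ↥(layer (n + 1)) →+* A :=
    emb.comp ((layer (n + 1)).val : ↥(layer (n + 1)) →+* Ψinf) with hembL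
  have hpp : Nat.Prime p := Fact.out
  have hp0 : (0:ℚ) < (p:ℚ) := by exact_mod_cast hpp.pos
  set Q : ℚ := ((p : ℚ) ^ (n + 1))⁻¹ with hQ
  have hQpos : 0 < Q := by positivity
  have hpQ : (p : ℚ) * Q = ((p : ℚ) ^ n)⁻¹ := by
    rw [hQ, pow_succ]
    field_simp
  -- the valuation of the uniformizer πn1
  have hπv : vd.v (embL πn1) = (Q : WithTop ℚ) := by
    have h1 : vd.v (embL πn1) ≤ vd.v (embL x1) := by
      refine hπn1.2.2 x1 ?_
      rw [hx1v]
      exact_mod_cast hQpos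
    have h2 : vd.v (embL x1) ≤ vd.v (embL πn1) := hx1u.2.2 πn1 hπn1.2.1
    rw [le_antisymm h1 h2, hx1v]
  have hπA0 : embL πn1 ≠ 0 :=
    fun h => hπn1.1 (embL.injective (by rw [h, map_zero]))
  -- gap lemma: nonzero values of elements of layer n have absolute value ≥ p^(-n)
  have hgap : ∀ a : ↥(layer n), a ≠ 0 → ∀ q : ℚ, vd.v (embK a) = (q : WithTop ℚ) →
      q ≠ 0 → ((p : ℚ) ^ n)⁻¹ ≤ |q| := by
    intro a ha q hq hq0
    have haA : embK a ≠ 0 := by simp [map_eq_zero, ha]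
    rcases lt_or_gt_of_ne hq0 with hneg | hpos
    · have hinv : vd.v (embK a⁻¹) = ((-q : ℚ) : WithTop ℚ) := by
        rw [map_inv₀]
        exact vd.v_inv haA hq
      have hmin := hπKu.2.2 a⁻¹ (by
        rw [hinv]
        exact_mod_cast (by linarith : (0:ℚ) < -q))
      rw [hπKv, hinv] at hmin
      have : ((p : ℚ) ^ n)⁻¹ ≤ -q := by exact_mod_cast hmin
      rwa [abs_of_neg hneg]
    · have hmin := hπKu.2.2 a (by rw [hq]; exact_mod_cast hpos)
      rw [hπKv, hq] at hmin
      have : ((p : ℚ) ^ n)⁻¹ ≤ q := by exact_mod_cast hmin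
      rwa [abs_of_pos hpos]
  -- compatibility of the two embeddings
  have hcomp : ∀ c : ↥(layer n),
      embL (algebraMap ↥(layer n) ↥(layer (n + 1)) c) = embK c := by
    intro c
    rw [hembL, hembK]
    simp only [RingHom.comp_apply]
    exact congrArg emb (IntermediateField.coe_inclusion hle c)
  -- the derivative evaluated at πn1
  have hlt : (Polynomial.derivative f).natDegree < p := by
    rw [← hdeg]
    exact Polynomial.natDegree_derivative_lt (by rw [hdeg]; exact hpp.ne_zero)
  have hD : Polynomial.aeval πn1 (Polynomial.derivative f)
      = ∑ i ∈ Finset.range p, (f.coeff (i + 1) * ((i : ↥(layer n)) + 1)) • πn1 ^ i := by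
    rw [Polynomial.aeval_eq_sum_range' hlt]
    refine Finset.sum_congr rfl fun i _ => ?_
    rw [Polynomial.coeff_derivative]
  have hπpow : ∀ k : ℕ, vd.v ((embL πn1) ^ k) = ((k * Q : ℚ) : WithTop ℚ) :=
    fun k => vd.v_pow_of_eq hπv k
  have hcast : ∀ j : ℕ, embK ((j : ↥(layer n)) + 1) = ((j + 1 : ℕ) : A) := by
    intro j
    rw [map_add, map_natCast, map_one]
    push_cast
    ring
  set g : ℕ → A :=
    fun i => embK (f.coeff (i + 1) * ((i : ↥(layer n)) + 1)) * (embL πn1) ^ i with hg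
  have hDemb : embL (Polynomial.aeval πn1 (Polynomial.derivative f))
      = ∑ i ∈ Finset.range p, g i := by
    rw [hD, map_sum]
    refine Finset.sum_congr rfl fun i _ => ?_
    simp only [hg]
    rw [Algebra.smul_def, map_mul, map_pow, hcomp]
  have hval : ∀ i : ℕ, ∀ q : ℚ,
      vd.v (embK (f.coeff (i + 1) * ((i : ↥(layer n)) + 1))) = (q : WithTop ℚ) →
      vd.v (g i) = ((q + i * Q : ℚ) : WithTop ℚ) := by
    intro i q hq
    simp only [hg]
    rw [vd.v_mul, hπpow i, hq, ← WithTop.coe_add]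
  -- the valuations of the (nonzero) terms are pairwise distinct
  have hdist : ∀ i ∈ Finset.range p, ∀ j ∈ Finset.range p, i ≠ j → g i ≠ 0 → g j ≠ 0 →
      vd.v (g i) ≠ vd.v (g j) := by
    intro i hi j hj hij hgi hgj heq
    have hci0 : f.coeff (i + 1) * ((i : ↥(layer n)) + 1) ≠ 0 := by
      intro h
      apply hgi
      simp only [hg, h, map_zero, zero_mul]
    have hcj0 : f.coeff (j + 1) * ((j : ↥(layer n)) + 1) ≠ 0 := by
      intro h
      apply hgj
      simp only [hg, h, map_zero, zero_mul]
    have hciA : embK (f.coeff (i + 1) * ((i : ↥(layer n)) + 1)) ≠ 0 :=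
      fun h => hci0 (embK.injective (by rw [h, map_zero]))
    have hcjA : embK (f.coeff (j + 1) * ((j : ↥(layer n)) + 1)) ≠ 0 :=
      fun h => hcj0 (embK.injective (by rw [h, map_zero]))
    obtain ⟨qi, hqi⟩ := WithTop.ne_top_iff_exists.1 (vd.v_ne_top hciA)
    obtain ⟨qj, hqj⟩ := WithTop.ne_top_iff_exists.1 (vd.v_ne_top hcjA)
    rw [hval i qi hqi.symm, hval j qj hqj.symm] at heq
    have heq' : qi + i * Q = qj + j * Q := by exact_mod_cast heq
    -- consider the quotient of the two coefficients in layer n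
    have ha0 : (f.coeff (i + 1) * ((i : ↥(layer n)) + 1))
        * (f.coeff (j + 1) * ((j : ↥(layer n)) + 1))⁻¹ ≠ 0 :=
      mul_ne_zero hci0 (inv_ne_zero hcj0)
    have hva : vd.v (embK ((f.coeff (i + 1) * ((i : ↥(layer n)) + 1))
        * (f.coeff (j + 1) * ((j : ↥(layer n)) + 1))⁻¹)) = ((qi - qj : ℚ) : WithTop ℚ) := by
      rw [map_mul, vd.v_mul, ← hqi, map_inv₀, vd.v_inv hcjA hqj.symm, ← WithTop.coe_add]
      congr 1
      ring
    have hijQ : qi - qj = ((j : ℚ) - i) * Q := by linarith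
    have hijne : ((j : ℚ) - i) ≠ 0 := by
      intro h
      apply hij
      have : (i : ℚ) = (j : ℚ) := by linarith
      exact_mod_cast this
    have hqne : qi - qj ≠ 0 := by
      rw [hijQ]
      exact mul_ne_zero hijne hQpos.ne'
    have hge := hgap _ ha0 _ hva hqne
    rw [← hpQ, hijQ, abs_mul, abs_of_pos hQpos] at hge
    have hi1 : (i : ℚ) + 1 ≤ p := by exact_mod_cast Finset.mem_range.1 hi
    have hj1 : (j : ℚ) + 1 ≤ p := by exact_mod_cast Finset.mem_range.1 hj
    have hi0 : (0 : ℚ) ≤ i := Nat.cast_nonneg i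
    have hj0 : (0 : ℚ) ≤ j := Nat.cast_nonneg j
    have habs : |(j : ℚ) - i| ≤ (p : ℚ) - 1 := by
      rw [abs_le]
      constructor <;> linarith
    nlinarith
  constructor
  · -- forward direction: coefficients divisible by p ⇒ f'(πn1) ∈ p R_{n+1}
    intro hco
    choose R hR0 hRe using hco
    set Rf : ℕ → ↥(layer n) :=
      fun i => if h : 1 ≤ i ∧ i ≤ p - 1 then R i h.1 h.2 else 0 with hRf
    have hRf0 : ∀ i, 0 ≤ vd.v (embK (Rf i)) := by
      intro i
      by_cases h : 1 ≤ i ∧ i ≤ p - 1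
      · simp only [hRf, dif_pos h]
        exact hR0 i h.1 h.2
      · simp only [hRf, dif_neg h, map_zero, vd.v_zero]
        exact le_top
    have hRfe : ∀ i, 1 ≤ i → i ≤ p - 1 → f.coeff i = (p : ↥(layer n)) * Rf i := by
      intro i h1 h2
      simp only [hRf, dif_pos (And.intro h1 h2)]
      exact hRe i h1 h2
    set ρ : ↥(layer (n + 1)) := f.coeff p • πn1 ^ (p - 1)
      + ∑ i ∈ Finset.range (p - 1), (Rf (i + 1) * ((i : ↥(layer n)) + 1)) • πn1 ^ i with hρ
    refine ⟨ρ, ?_, ?_⟩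
    · have h1 : 0 ≤ vd.v (embL (f.coeff p • πn1 ^ (p - 1))) := by
        rw [Algebra.smul_def, map_mul, hcomp, map_pow, vd.v_mul]
        exact add_nonneg (hint p) (vd.v_pow_nonneg (le_of_lt hπn1.2.1) _)
      have h2 : 0 ≤ vd.v (embL (∑ i ∈ Finset.range (p - 1),
          (Rf (i + 1) * ((i : ↥(layer n)) + 1)) • πn1 ^ i)) := by
        rw [map_sum]
        refine vd.v_sum_ge _ _ ?_
        intro i _
        rw [Algebra.smul_def, map_mul, hcomp, map_pow, vd.v_mul, map_mul, vd.v_mul]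
        refine add_nonneg (add_nonneg (hRf0 _) ?_) (vd.v_pow_nonneg (le_of_lt hπn1.2.1) _)
        rw [hcast]
        exact vd.v_natCast_nonneg _
      rw [hρ, map_add]
      exact le_trans (le_min h1 h2) (vd.v_min_le_add _ _)
    · rw [hD]
      have hp1 : p - 1 + 1 = p := Nat.succ_pred_eq_of_pos hpp.pos
      have hsplit : (∑ i ∈ Finset.range p, (f.coeff (i + 1) * ((i : ↥(layer n)) + 1)) • πn1 ^ i)
          = ∑ i ∈ Finset.range (p - 1), (f.coeff (i + 1) * ((i : ↥(layer n)) + 1)) • πn1 ^ i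
            + (f.coeff (p - 1 + 1) * (((p - 1 : ℕ) : ↥(layer n)) + 1)) • πn1 ^ (p - 1) := by
        rw [← Finset.sum_range_succ, hp1]
      rw [hsplit]
      have hcastp : (((p - 1 : ℕ) : ↥(layer n)) + 1) = ((p : ℕ) : ↥(layer n)) := by
        have : (((p - 1 + 1 : ℕ)) : ↥(layer n)) = ((p - 1 : ℕ) : ↥(layer n)) + 1 := by
          push_cast
          ring
        rw [← this, hp1]
      have hlast : (f.coeff (p - 1 + 1) * (((p - 1 : ℕ) : ↥(layer n)) + 1)) • πn1 ^ (p - 1)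
          = (p : ↥(layer (n + 1))) * (f.coeff p • πn1 ^ (p - 1)) := by
        rw [hp1, hcastp]
        simp only [Algebra.smul_def, map_mul, map_natCast]
        ring
      have hterms : ∀ i ∈ Finset.range (p - 1),
          (f.coeff (i + 1) * ((i : ↥(layer n)) + 1)) • πn1 ^ i
          = (p : ↥(layer (n + 1))) * ((Rf (i + 1) * ((i : ↥(layer n)) + 1)) • πn1 ^ i) := by
        intro i hi
        rw [hRfe (i + 1) (Nat.le_add_left 1 i) (Nat.succ_le_of_lt (Finset.mem_range.1 hi))]
        simp only [Algebra.smul_def, map_mul, map_natCast, map_add, map_one]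
        ring
      rw [Finset.sum_congr rfl hterms, hlast, ← Finset.mul_sum, hρ]
      ring
  · -- backward direction: f'(πn1) ∈ p R_{n+1} ⇒ coefficients divisible by p
    rintro ⟨r, hr0, hr⟩ i h1i hip
    have hv1 : (1 : WithTop ℚ) ≤ vd.v (embL (Polynomial.aeval πn1 (Polynomial.derivative f))) := by
      rw [hr, map_mul, map_natCast, vd.v_mul, vd.v_coe_p]
      exact le_add_of_nonneg_right hr0
    rw [hDemb] at hv1
    have hall := vd.v_sum_distinct hdist hv1
    have hiplt : i < p := lt_of_le_of_lt hip (Nat.sub_lt hpp.pos one_pos)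
    set j : ℕ := i - 1 with hjdef
    have hj1 : j + 1 = i := Nat.succ_pred_eq_of_pos h1i
    have hjp : j ∈ Finset.range p := Finset.mem_range.2 (lt_of_le_of_lt (Nat.sub_le i 1) hiplt)
    by_cases hfi : f.coeff i = 0
    · exact ⟨0, by rw [map_zero, vd.v_zero]; exact le_top, by rw [hfi, mul_zero]⟩
    · have hpdvd : ¬ p ∣ i :=
        fun hd => absurd (Nat.le_of_dvd h1i hd) (not_le.2 hiplt)
      have hiA : vd.v ((i : A)) = 0 := vd.v_nat_coprime hpdvd
      have hcast' : embK ((j : ↥(layer n)) + 1) = (i : A) := by rw [hcast j, hj1]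
      have hcij0 : ((j : ↥(layer n)) + 1) ≠ 0 := by
        intro h
        have h2 := hiA
        rw [← hcast', h, map_zero, vd.v_zero] at h2
        simp at h2
      have hfiA : embK (f.coeff i) ≠ 0 := by simp [map_eq_zero, hfi]
      obtain ⟨q, hq⟩ := WithTop.ne_top_iff_exists.1 (vd.v_ne_top hfiA)
      have hvcj : vd.v (embK (f.coeff (j + 1) * ((j : ↥(layer n)) + 1))) = (q : WithTop ℚ) := by
        rw [map_mul, hj1, hcast', vd.v_mul, ← hq, hiA, add_zero]
      have hgj := hall j hjp
      rw [hval j q hvcj] at hgj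
      have h1q : (1 : ℚ) ≤ q + j * Q := by exact_mod_cast hgj
      have hjlt : (j : ℚ) + 1 ≤ p := by exact_mod_cast Finset.mem_range.1 hjp
      have hj0 : (0 : ℚ) ≤ j := Nat.cast_nonneg j
      have hpK : vd.v (embK ((p : ℕ) : ↥(layer n))) = ((1 : ℚ) : WithTop ℚ) := by
        rw [map_natCast, vd.v_coe_p, WithTop.coe_one]
      have hpK0 : ((p : ℕ) : ↥(layer n)) ≠ 0 := by
        intro h
        rw [h, map_zero, vd.v_zero] at hpK
        simp at hpK
      have hq1 : 1 ≤ q := by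
        by_contra hlt
        push_neg at hlt
        have ha0 : ((p : ℕ) : ↥(layer n)) * (f.coeff i)⁻¹ ≠ 0 :=
          mul_ne_zero hpK0 (inv_ne_zero hfi)
        have hva : vd.v (embK (((p : ℕ) : ↥(layer n)) * (f.coeff i)⁻¹))
            = ((1 - q : ℚ) : WithTop ℚ) := by
          rw [map_mul, vd.v_mul, hpK, map_inv₀, vd.v_inv hfiA hq.symm, ← WithTop.coe_add]
          congr 1
          ring
        have hgapa := hgap _ ha0 _ hva (by linarith : (1 - q : ℚ) ≠ 0)
        rw [← hpQ, abs_of_pos (by linarith : (0:ℚ) < 1 - q)] at hgapa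
        nlinarith
      refine ⟨f.coeff i * (((p : ℕ) : ↥(layer n)))⁻¹, ?_, ?_⟩
      · have hvr : vd.v (embK (f.coeff i * (((p : ℕ) : ↥(layer n)))⁻¹))
            = ((q - 1 : ℚ) : WithTop ℚ) := by
          rw [map_mul, vd.v_mul, ← hq, map_inv₀,
            vd.v_inv (fun h => hpK0 (embK.injective (by rw [h, map_zero]))) hpK, ← WithTop.coe_add]
          congr 1
          ring
        rw [hvr]
        exact_mod_cast (by linarith : (0 : ℚ) ≤ q - 1)
      · rw [mul_comm (f.coeff i), ← mul_assoc, mul_inv_cancel₀ hpK0, one_mul]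



end
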